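/- For all integers n ≥ 1 and m ≥ 2, the n×m jigsaw dilutes to the n×(m−1) jigsaw, i.e., the n×(m−1) jigsaw is a hypergraph dilution of the n×m jigsaw. -/

import Mathlib

namespace DilutionPaper

universe u v w

/-- A (finite) hypergraph: a finite vertex set together with a set of
hyperedges, each a subset of the vertex set. -/
structure Hypergraph (α : Type u) [DecidableEq α] where
  verts : Finset α
  edges : Finset (Finset α)
  valid : ∀ e ∈ edges, e ⊆ verts

variable {α : Type u} {β : Type v} {γ : Type w}
variable [DecidableEq α] [DecidableEq β] [DecidableEq γ]

namespace Hypergraph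

/-- The set `I_v` of edges incident to a vertex. -/
def incident (H : Hypergraph α) (vtx : α) : Finset (Finset α) :=
  H.edges.filter (fun e => vtx ∈ e)

/-- The degree of a hypergraph: the maximum degree of a vertex. -/
def degree (H : Hypergraph α) : ℕ :=
  H.verts.sup fun vtx => (H.incident vtx).card

/-- The rank: maximum cardinality of an edge. -/
def rank (H : Hypergraph α) : ℕ := H.edges.sup Finset.card

/-- Deletion of a vertex (from the vertex set and from all edges). -/
def deleteVertex (H : Hypergraph α) (vtx : α) : Hypergraph α where
  verts := H.verts.erase vtx
  edges := H.edges.image fun e => e.erase vtx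
  valid := by
    intro e he
    rcases Finset.mem_image.mp he with ⟨f, hf, rfl⟩
    intro x hx
    rcases Finset.mem_erase.mp hx with ⟨hx1, hx2⟩
    exact Finset.mem_erase.mpr ⟨hx1, H.valid f hf hx2⟩

/-- Deletion of an edge. -/
def deleteEdge (H : Hypergraph α) (f : Finset α) : Hypergraph α where
  verts := H.verts
  edges := H.edges.erase f
  valid := fun e he => H.valid e (Finset.mem_of_mem_erase he)

/-- The new edge `(⋃ I_v) \ {v}` created by merging on `v`. -/
def mergedEdge (H : Hypergraph α) (vtx : α) : Finset α :=
  ((H.incident vtx).biUnion id).erase vtx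

/-- Merging on a vertex `v`: replace all edges incident to `v` by the single
new edge `(⋃ I_v) \ {v}` (and remove `v` from the vertex set). -/
def merge (H : Hypergraph α) (vtx : α) : Hypergraph α where
  verts := H.verts.erase vtx
  edges := (H.edges \ H.incident vtx) ∪ {H.mergedEdge vtx}
  valid := by
    intro e he
    rcases Finset.mem_union.mp he with he | he
    · rcases Finset.mem_sdiff.mp he with ⟨heE, heI⟩
      intro x hx
      refine Finset.mem_erase.mpr ⟨?_, H.valid e heE hx⟩
      rintro rfl
      exact heI (Finset.mem_filter.mpr ⟨heE, hx⟩)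
    · rw [Finset.mem_singleton] at he
      subst he
      intro x hx
      rcases Finset.mem_erase.mp hx with ⟨hx1, hx2⟩
      rcases Finset.mem_biUnion.mp hx2 with ⟨f, hf, hxf⟩
      exact Finset.mem_erase.mpr ⟨hx1, H.valid f (Finset.mem_filter.mp hf).1 hxf⟩

/-- A single dilution operation. -/
inductive Step : Hypergraph α → Hypergraph α → Prop
  | deleteVertex (H : Hypergraph α) (vtx : α) (hv : vtx ∈ H.verts) :
      Step H (H.deleteVertex vtx)
  | deleteSubedge (H : Hypergraph α) (f e : Finset α) (hf : f ∈ H.edges)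
      (he : e ∈ H.edges) (hfe : f ⊂ e) : Step H (H.deleteEdge f)
  | merge (H : Hypergraph α) (vtx : α) (hv : vtx ∈ H.verts)
      (hne : (H.incident vtx).Nonempty) : Step H (H.merge vtx)

/-- Isomorphism of hypergraphs: a bijection on vertices inducing a bijection
on edges. -/
def Isomorphic (H : Hypergraph α) (G : Hypergraph β) : Prop :=
  ∃ φ : α → β, Set.BijOn φ ↑H.verts ↑G.verts ∧
    Set.BijOn (fun e : Finset α => e.image φ) ↑H.edges ↑G.edges

/-- `H'.DilutesTo H`: `H` is a hypergraph dilution of `H'`, i.e. `H` is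
isomorphic to a hypergraph reachable from `H'` by a finite sequence of
dilution operations. -/
def DilutesTo (H' : Hypergraph α) (H : Hypergraph β) : Prop :=
  ∃ K : Hypergraph α, Relation.ReflTransGen Step H' K ∧ K.Isomorphic H

/-- A tree decomposition of a hypergraph. -/
structure TreeDecomp (H : Hypergraph α) where
  ι : Type
  T : SimpleGraph ι
  isTree : T.IsTree
  bags : ι → Finset α
  bags_sub : ∀ u, bags u ⊆ H.verts
  cover : ∀ e ∈ H.edges, ∃ u, e ⊆ bags u
  link : ∀ vtx : α, (T.induce {u | vtx ∈ bags u}).Preconnected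

/-- The edge cover number `ρ(S)`: the least number of edges whose union
contains `S` (`⊤` if there is no such family). -/
noncomputable def edgeCoverNum (H : Hypergraph α) (S : Finset α) : ℕ∞ :=
  sInf {k : ℕ∞ | ∃ F : Finset (Finset α),
    F ⊆ H.edges ∧ (F.card : ℕ∞) = k ∧ S ⊆ F.biUnion id}

/-- The `ρ`-width of a tree decomposition. -/
noncomputable def TreeDecomp.ghwWidth {H : Hypergraph α} (td : TreeDecomp H) : ℕ∞ :=
  ⨆ u : td.ι, edgeCoverNum H (td.bags u)

/-- Generalised hypertree width. -/
noncomputable def ghw (H : Hypergraph α) : ℕ∞ :=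
  ⨅ td : TreeDecomp H, td.ghwWidth

/-- Treewidth. -/
noncomputable def tw (H : Hypergraph α) : ℕ∞ :=
  ⨅ td : TreeDecomp H, ⨆ u : td.ι, ((td.bags u).card : ℕ∞) - 1

/-- The dual hypergraph: vertices are the edges of `H`, edges are the
incidence sets `I_v`. -/
def dual (H : Hypergraph α) : Hypergraph (Finset α) where
  verts := H.edges
  edges := H.verts.image fun vtx => H.incident vtx
  valid := by
    intro e he
    rcases Finset.mem_image.mp he with ⟨vtx, -, rfl⟩
    intro f hf
    exact (Finset.mem_filter.mp hf).1

/-- A reduced hypergraph: no degree-0 vertex, no empty edge, and no two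
distinct vertices with the same incident edge set. -/
def IsReduced (H : Hypergraph α) : Prop :=
  (∀ vtx ∈ H.verts, (H.incident vtx).Nonempty) ∧
  (∅ ∉ H.edges) ∧
  ∀ vtx ∈ H.verts, ∀ w ∈ H.verts, H.incident vtx = H.incident w → vtx = w

/-- The hypergraph obtained from `H` by keeping only the vertices in `R`
(deleting all others from the vertex set and from all edges) and deleting
all (resulting) empty edges. -/
def reduceBy (H : Hypergraph α) (R : Finset α) : Hypergraph α where
  verts := R
  edges := (H.edges.image fun e => e ∩ R).filter fun e => e ≠ ∅
  valid := by
    intro e he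
    rcases Finset.mem_image.mp (Finset.mem_filter.mp he).1 with ⟨f, -, rfl⟩
    exact Finset.inter_subset_right

/-- `R` is a system of representatives witnessing that `H.reduceBy R` is the
reduced hypergraph of `H`: `R` consists of vertices of positive degree, one
for each class of vertices with identical incident edge sets. -/
def IsReductionRep (H : Hypergraph α) (R : Finset α) : Prop :=
  R ⊆ H.verts ∧
  (∀ vtx ∈ R, (H.incident vtx).Nonempty) ∧
  ∀ vtx ∈ H.verts, (H.incident vtx).Nonempty →
    ∃! w, w ∈ R ∧ H.incident w = H.incident vtx

/-- Adjacency in (the primal graph of) a hypergraph. -/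
def Adj (H : Hypergraph α) (x y : α) : Prop :=
  x ≠ y ∧ ∃ e ∈ H.edges, x ∈ e ∧ y ∈ e

/-- Connectedness of a hypergraph. -/
def Connected (H : Hypergraph α) : Prop :=
  H.verts.Nonempty ∧
  ∀ x ∈ H.verts, ∀ y ∈ H.verts, Relation.ReflTransGen H.Adj x y

/-- A graph, viewed as a 2-uniform hypergraph. -/
def IsGraph (H : Hypergraph α) : Prop := ∀ e ∈ H.edges, e.card = 2

/-- A set of vertices is connected (in the primal graph), staying inside the set. -/
def ConnectedIn (F : Hypergraph β) (S : Finset β) : Prop :=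
  ∀ x ∈ S, ∀ y ∈ S,
    Relation.ReflTransGen (fun a b => a ∈ S ∧ b ∈ S ∧ F.Adj a b) x y

/-- A minor map from the graph `G` into (the primal graph of) `F`. -/
def IsMinorMap (G : Hypergraph γ) (F : Hypergraph β) (μ : γ → Finset β) : Prop :=
  (∀ vtx ∈ G.verts, (μ vtx).Nonempty ∧ μ vtx ⊆ F.verts ∧ F.ConnectedIn (μ vtx)) ∧
  (∀ x ∈ G.verts, ∀ y ∈ G.verts, x ≠ y → μ x ∩ μ y = ∅) ∧
  ∀ x y : γ, G.Adj x y → ∃ a ∈ μ x, ∃ b ∈ μ y, F.Adj a b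

/-- `G` is a minor of (the primal graph of) `F`. -/
def IsMinor (G : Hypergraph γ) (F : Hypergraph β) : Prop :=
  ∃ μ : γ → Finset β, IsMinorMap G F μ

/-- The `n×m` grid graph (as a 2-uniform hypergraph on `[n]×[m]`,
zero-indexed): `(i,j)` and `(i',j')` are adjacent iff `|i−i'| + |j−j'| = 1`. -/
def gridGraph (n m : ℕ) : Hypergraph (ℕ × ℕ) where
  verts := Finset.range n ×ˢ Finset.range m
  edges :=
    (((Finset.range n ×ˢ Finset.range m) ×ˢ (Finset.range n ×ˢ Finset.range m)).filter
        fun p => Nat.dist p.1.1 p.2.1 + Nat.dist p.1.2 p.2.2 = 1).image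
      fun p => {p.1, p.2}
  valid := by
    intro e he
    rcases Finset.mem_image.mp he with ⟨p, hp, rfl⟩
    rcases Finset.mem_product.mp (Finset.mem_filter.mp hp).1 with ⟨h1, h2⟩
    intro x hx
    rcases Finset.mem_insert.mp hx with rfl | hx
    · exact h1
    · rw [Finset.mem_singleton] at hx; subst hx; exact h2

/-- The `n×m` jigsaw: the hypergraph dual of the `n×m` grid graph. -/
def jigsaw (n m : ℕ) : Hypergraph (Finset (ℕ × ℕ)) := (gridGraph n m).dual

/-- A path in a hypergraph: an alternating sequence
`v 0, e 0, v 1, …, e (ℓ-1), v ℓ` of pairwise distinct vertices and pairwise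
distinct edges with `{v i, v (i+1)} ⊆ e i`. -/
structure IsHPath (H : Hypergraph α) (ℓ : ℕ) (pv : ℕ → α) (pe : ℕ → Finset α) : Prop where
  vert_mem : ∀ i ≤ ℓ, pv i ∈ H.verts
  edge_mem : ∀ i < ℓ, pe i ∈ H.edges
  vert_inj : ∀ i ≤ ℓ, ∀ j ≤ ℓ, pv i = pv j → i = j
  edge_inj : ∀ i < ℓ, ∀ j < ℓ, pe i = pe j → i = j
  incid : ∀ i < ℓ, pv i ∈ pe i ∧ pv (i + 1) ∈ pe i

/-- An expressive minor map from the graph `G` into the hypergraph `H`,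
together with its edge witness `ρ`. -/
def IsExpressiveMinorMap (G : Hypergraph γ) (H : Hypergraph α)
    (μ : γ → Finset α) (ρ : Finset γ → Finset α) : Prop :=
  IsMinorMap G H μ ∧
  H.verts = G.verts.biUnion μ ∧
  Set.InjOn ρ ↑G.edges ∧
  (∀ e ∈ G.edges, ρ e ∈ H.edges) ∧
  (∀ x y : γ, ({x, y} : Finset γ) ∈ G.edges →
    (∃ a ∈ ρ {x, y}, a ∈ μ x) ∧ ∃ b ∈ ρ {x, y}, b ∈ μ y) ∧
  ∀ e₁ ∈ G.edges, ∀ e₂ ∈ G.edges, e₁ ≠ e₂ → (e₁ ∩ e₂).Nonempty →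
    ∃ (ℓ : ℕ) (pv : ℕ → α) (pe : ℕ → Finset α),
      IsHPath H ℓ pv pe ∧ pv 0 ∈ ρ e₁ ∧ pv ℓ ∈ ρ e₂ ∧
      ∀ i < ℓ, (∃ f ∈ G.edges, pe i = ρ f) →
        (i = 0 ∧ pe i = ρ e₁) ∨ (i = ℓ - 1 ∧ pe i = ρ e₂)

/-- `G` is an expressive minor of `H`. -/
def IsExpressiveMinor (G : Hypergraph γ) (H : Hypergraph α) : Prop :=
  ∃ (μ : γ → Finset α) (ρ : Finset γ → Finset α), IsExpressiveMinorMap G H μ ρ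

/-- A witness that `P` is an `n×m` pre-jigsaw: mappings `π` (here `vmap`) and
`o` (here `emap`) from the `n×m` jigsaw `J` into `P`, together with a fixed
family of connecting paths. -/
structure PreJigsawWitness (n m : ℕ) (P : Hypergraph α) where
  vmap : Finset (ℕ × ℕ) → α
  emap : Finset (Finset (ℕ × ℕ)) → Finset (Finset α)
  plen : Finset (ℕ × ℕ) → Finset (ℕ × ℕ) → Finset (Finset (ℕ × ℕ)) → ℕ
  ppv : Finset (ℕ × ℕ) → Finset (ℕ × ℕ) → Finset (Finset (ℕ × ℕ)) → ℕ → α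
  ppe : Finset (ℕ × ℕ) → Finset (ℕ × ℕ) → Finset (Finset (ℕ × ℕ)) → ℕ → Finset α
  vmap_mem : ∀ u ∈ (jigsaw n m).verts, vmap u ∈ P.verts
  emap_sub : ∀ e ∈ (jigsaw n m).edges, emap e ⊆ P.edges
  emap_disj : ∀ e ∈ (jigsaw n m).edges, ∀ f ∈ (jigsaw n m).edges, e ≠ f →
    emap e ∩ emap f = ∅
  emap_cover : ∀ g ∈ P.edges, ∃ e ∈ (jigsaw n m).edges, g ∈ emap e
  path_isPath : ∀ e ∈ (jigsaw n m).edges, ∀ u ∈ e, ∀ w ∈ e, u ≠ w →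
    IsHPath P (plen u w e) (ppv u w e) (ppe u w e)
  path_start : ∀ e ∈ (jigsaw n m).edges, ∀ u ∈ e, ∀ w ∈ e, u ≠ w →
    ppv u w e 0 = vmap u
  path_end : ∀ e ∈ (jigsaw n m).edges, ∀ u ∈ e, ∀ w ∈ e, u ≠ w →
    ppv u w e (plen u w e) = vmap w
  path_edges : ∀ e ∈ (jigsaw n m).edges, ∀ u ∈ e, ∀ w ∈ e, u ≠ w →
    ∀ i < plen u w e, ppe u w e i ∈ emap e
  path_avoid : ∀ e ∈ (jigsaw n m).edges, ∀ u ∈ e, ∀ w ∈ e, u ≠ w →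
    ∀ i ≤ plen u w e, ∀ z ∈ (jigsaw n m).verts, ppv u w e i = vmap z →
      ppv u w e i = vmap u ∨ ppv u w e i = vmap w
  vert_cover : ∀ x ∈ P.verts,
    (∃ u ∈ (jigsaw n m).verts, vmap u = x) ∨
    ∃ e ∈ (jigsaw n m).edges, ∃ u ∈ e, ∃ w ∈ e, u ≠ w ∧
      ∃ i ≤ plen u w e, ppv u w e i = x

/-- `P` is an `n×m` pre-jigsaw. -/
def IsPreJigsaw (n m : ℕ) (P : Hypergraph α) : Prop :=
  Nonempty (PreJigsawWitness n m P)



/-! ### Auxiliary material for the dilution proof -/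

theorem hyp_ext {H G : Hypergraph α} (h1 : H.verts = G.verts) (h2 : H.edges = G.edges) :
    H = G := by
  cases H; cases G; simp_all

lemma mem_incident' {H : Hypergraph α} {v : α} {f : Finset α} :
    f ∈ H.incident v ↔ f ∈ H.edges ∧ v ∈ f := by
  simp [incident]

/-- Delete a whole set of vertices at once. -/
def sdiffH (H : Hypergraph α) (S : Finset α) : Hypergraph α where
  verts := H.verts \ S
  edges := H.edges.image fun e => e \ S
  valid := by
    intro e he
    rcases Finset.mem_image.mp he with ⟨f, hf, rfl⟩
    intro x hx
    rcases Finset.mem_sdiff.mp hx with ⟨hx1, hx2⟩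
    exact Finset.mem_sdiff.mpr ⟨H.valid f hf hx1, hx2⟩

lemma sdiffH_verts (H : Hypergraph α) (S : Finset α) : (sdiffH H S).verts = H.verts \ S := rfl

lemma sdiffH_edges (H : Hypergraph α) (S : Finset α) :
    (sdiffH H S).edges = H.edges.image fun e => e \ S := rfl

lemma sdiffH_empty (H : Hypergraph α) : sdiffH H ∅ = H := by
  refine hyp_ext ?_ ?_ <;> simp [sdiffH]

lemma deleteVertex_eq_sdiffH (H : Hypergraph α) (v : α) :
    H.deleteVertex v = sdiffH H {v} := by
  refine hyp_ext ?_ ?_ <;> simp [deleteVertex, sdiffH, Finset.erase_eq]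

lemma sdiffH_sdiffH (H : Hypergraph α) (S T : Finset α) :
    sdiffH (sdiffH H S) T = sdiffH H (S ∪ T) := by
  refine hyp_ext ?_ ?_
  · ext x
    simp only [sdiffH, Finset.mem_sdiff, Finset.mem_union]
    tauto
  · simp only [sdiffH, Finset.image_image]
    apply Finset.image_congr
    intro e _
    ext x
    simp only [Function.comp_apply, Finset.mem_sdiff, Finset.mem_union]
    tauto

lemma steps_sdiffH (L : List α) (H : Hypergraph α) (hnd : L.Nodup)
    (hmem : ∀ v ∈ L, v ∈ H.verts) :
    Relation.ReflTransGen Step H (sdiffH H L.toFinset) := by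
  induction L generalizing H with
  | nil => simpa [sdiffH_empty] using Relation.ReflTransGen.refl
  | cons v L ih =>
    have hv : v ∈ H.verts := hmem v (by simp)
    have hstep : Step H (H.deleteVertex v) := Step.deleteVertex H v hv
    have hnd' := List.nodup_cons.mp hnd
    have h2 : ∀ w ∈ L, w ∈ (H.deleteVertex v).verts := by
      intro w hw
      have hwv : w ≠ v := fun h => hnd'.1 (h ▸ hw)
      exact Finset.mem_erase.mpr ⟨hwv, hmem w (by simp [hw])⟩
    have htail := ih (H.deleteVertex v) hnd'.2 h2
    have heq : sdiffH (H.deleteVertex v) L.toFinset = sdiffH H ((v :: L).toFinset) := by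
      rw [deleteVertex_eq_sdiffH, sdiffH_sdiffH]
      congr 1
      ext x
      simp
    exact Relation.ReflTransGen.head hstep (heq ▸ htail)

/-- Horizontal grid edge from `(i,j)` to `(i,j+1)`. -/
def gHe (i j : ℕ) : Finset (ℕ × ℕ) := {(i, j), (i, j + 1)}

/-- Vertical grid edge from `(i,j)` to `(i+1,j)`. -/
def gVe (i j : ℕ) : Finset (ℕ × ℕ) := {(i, j), (i + 1, j)}

lemma mem_gHe {p : ℕ × ℕ} {i j : ℕ} : p ∈ gHe i j ↔ p = (i, j) ∨ p = (i, j + 1) := by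
  simp [gHe]

lemma mem_gVe {p : ℕ × ℕ} {i j : ℕ} : p ∈ gVe i j ↔ p = (i, j) ∨ p = (i + 1, j) := by
  simp [gVe]

lemma gHe_inj {i j i' j' : ℕ} (h : gHe i j = gHe i' j') : i = i' ∧ j = j' := by
  have h1 : (i, j) ∈ gHe i' j' := h ▸ (by simp [gHe] : (i,j) ∈ gHe i j)
  have h2 : (i, j + 1) ∈ gHe i' j' := h ▸ (by simp [gHe] : (i,j+1) ∈ gHe i j)
  rw [mem_gHe] at h1 h2
  rcases h1 with h1 | h1 <;> rcases h2 with h2 | h2 <;>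
    simp only [Prod.mk.injEq] at h1 h2 <;> omega

lemma gVe_inj {i j i' j' : ℕ} (h : gVe i j = gVe i' j') : i = i' ∧ j = j' := by
  have h1 : (i, j) ∈ gVe i' j' := h ▸ (by simp [gVe] : (i,j) ∈ gVe i j)
  have h2 : (i + 1, j) ∈ gVe i' j' := h ▸ (by simp [gVe] : (i+1,j) ∈ gVe i j)
  rw [mem_gVe] at h1 h2
  rcases h1 with h1 | h1 <;> rcases h2 with h2 | h2 <;>
    simp only [Prod.mk.injEq] at h1 h2 <;> omega

lemma mem_gridGraph_verts {n m : ℕ} {p : ℕ × ℕ} :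
    p ∈ (gridGraph n m).verts ↔ p.1 < n ∧ p.2 < m := by
  cases p
  simp [gridGraph, Finset.mem_product]

lemma mem_gridGraph_edges {n m : ℕ} {e : Finset (ℕ × ℕ)} :
    e ∈ (gridGraph n m).edges ↔
      (∃ i j, i < n ∧ j + 1 < m ∧ e = gHe i j) ∨
      (∃ i j, i + 1 < n ∧ j < m ∧ e = gVe i j) := by
  constructor
  · intro he
    rcases Finset.mem_image.mp he with ⟨⟨⟨a, b⟩, ⟨c, d⟩⟩, hp, rfl⟩
    rcases Finset.mem_filter.mp hp with ⟨hmem, hdist⟩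
    rcases Finset.mem_product.mp hmem with ⟨h1, h2⟩
    rcases Finset.mem_product.mp h1 with ⟨ha, hb⟩
    rcases Finset.mem_product.mp h2 with ⟨hc, hd⟩
    simp only [Finset.mem_range] at ha hb hc hd
    simp only [Nat.dist] at hdist
    have hcase : (a = c ∧ d = b + 1) ∨ (a = c ∧ b = d + 1) ∨
        (b = d ∧ c = a + 1) ∨ (b = d ∧ a = c + 1) := by omega
    rcases hcase with ⟨rfl, rfl⟩ | ⟨rfl, rfl⟩ | ⟨rfl, rfl⟩ | ⟨rfl, rfl⟩
    · exact Or.inl ⟨a, b, ha, hd, rfl⟩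
    · exact Or.inl ⟨a, d, ha, hb, Finset.pair_comm _ _⟩
    · exact Or.inr ⟨a, b, hc, hb, rfl⟩
    · exact Or.inr ⟨c, b, ha, hb, Finset.pair_comm _ _⟩
  · intro h
    apply Finset.mem_image.mpr
    rcases h with ⟨i, j, h1, h2, rfl⟩ | ⟨i, j, h1, h2, rfl⟩
    · refine ⟨((i, j), (i, j + 1)), Finset.mem_filter.mpr ⟨?_, ?_⟩, rfl⟩
      · simp only [Finset.mem_product, Finset.mem_range]
        omega
      · simp only [Nat.dist]
        omega
    · refine ⟨((i, j), (i + 1, j)), Finset.mem_filter.mpr ⟨?_, ?_⟩, rfl⟩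
      · simp only [Finset.mem_product, Finset.mem_range]
        omega
      · simp only [Nat.dist]
        omega

lemma col_lt {n m : ℕ} {e : Finset (ℕ × ℕ)} (he : e ∈ (gridGraph n m).edges) {p : ℕ × ℕ}
    (hp : p ∈ e) : p.1 < n ∧ p.2 < m :=
  mem_gridGraph_verts.mp ((gridGraph n m).valid e he hp)

lemma grid_edges_mono {n m₁ m₂ : ℕ} (h : m₁ ≤ m₂) :
    (gridGraph n m₁).edges ⊆ (gridGraph n m₂).edges := by
  intro e he
  rcases mem_gridGraph_edges.mp he with ⟨i, j, h1, h2, rfl⟩ | ⟨i, j, h1, h2, rfl⟩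
  · exact mem_gridGraph_edges.mpr (Or.inl ⟨i, j, h1, by omega, rfl⟩)
  · exact mem_gridGraph_edges.mpr (Or.inr ⟨i, j, h1, by omega, rfl⟩)

lemma gHe_mem_big {n k i : ℕ} (hi : i < n) : gHe i k ∈ (gridGraph n (k + 2)).edges :=
  mem_gridGraph_edges.mpr (Or.inl ⟨i, k, hi, by omega, rfl⟩)

lemma gHe_not_small {n k i : ℕ} : gHe i k ∉ (gridGraph n (k + 1)).edges := by
  intro h
  have := (col_lt h (p := (i, k + 1)) (by simp [gHe])).2
  omega

lemma small_of_big {n k : ℕ} {f : Finset (ℕ × ℕ)} {i j : ℕ}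
    (hf : f ∈ (gridGraph n (k + 2)).edges) (hp : (i, j) ∈ f) (hj : j ≤ k)
    (hne : f ≠ gHe i k) : f ∈ (gridGraph n (k + 1)).edges := by
  rcases mem_gridGraph_edges.mp hf with ⟨a, b, h1, h2, rfl⟩ | ⟨a, b, h1, h2, rfl⟩
  · have hik : i = a ∧ (j = b ∨ j = b + 1) := by
      rcases mem_gHe.mp hp with h | h <;> rw [Prod.mk.injEq] at h <;> tauto
    have hb : b < k := by
      rcases hik.2 with h | h
      · rcases Nat.lt_or_ge b k with hlt | hge
        · exact hlt
        · exfalso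
          apply hne
          have hb2 : b = k := by omega
          rw [hik.1, ← hb2]
      · omega
    exact mem_gridGraph_edges.mpr (Or.inl ⟨a, b, h1, by omega, rfl⟩)
  · have hb : b = j := by
      rcases mem_gVe.mp hp with h | h <;> rw [Prod.mk.injEq] at h <;> omega
    exact mem_gridGraph_edges.mpr (Or.inr ⟨a, b, h1, by omega, rfl⟩)

/-- The vertical grid edges in the last column (to be deleted). -/
def SVset (n k : ℕ) : Finset (Finset (ℕ × ℕ)) :=
  (Finset.range (n - 1)).image fun i => gVe i (k + 1)

lemma mem_SVset {n k : ℕ} {f : Finset (ℕ × ℕ)} :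
    f ∈ SVset n k ↔ ∃ i, i + 1 < n ∧ f = gVe i (k + 1) := by
  simp only [SVset, Finset.mem_image, Finset.mem_range]
  constructor
  · rintro ⟨i, hi, rfl⟩
    exact ⟨i, by omega, rfl⟩
  · rintro ⟨i, hi, rfl⟩
    exact ⟨i, by omega, rfl⟩

lemma col_of_SV {n k : ℕ} {f : Finset (ℕ × ℕ)} (hf : f ∈ SVset n k) {a b : ℕ}
    (hp : (a, b) ∈ f) : b = k + 1 := by
  rcases mem_SVset.mp hf with ⟨i, hi, rfl⟩
  rcases mem_gVe.mp hp with h | h <;> rw [Prod.mk.injEq] at h <;> omega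

lemma incident_sdiff_SV {n k i j : ℕ} (hj : j ≤ k) :
    (gridGraph n (k + 2)).incident (i, j) \ SVset n k = (gridGraph n (k + 2)).incident (i, j) := by
  ext f
  constructor
  · exact fun h => (Finset.mem_sdiff.mp h).1
  · intro h
    refine Finset.mem_sdiff.mpr ⟨h, fun hSV => ?_⟩
    have := col_of_SV hSV (mem_incident'.mp h).2
    omega

lemma incident_last_sdiff_SV {n k i : ℕ} (hi : i < n) :
    (gridGraph n (k + 2)).incident (i, k + 1) \ SVset n k = {gHe i k} := by
  ext f
  simp only [Finset.mem_sdiff, mem_incident', Finset.mem_singleton]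
  constructor
  · rintro ⟨⟨hf, hp⟩, hSV⟩
    rcases mem_gridGraph_edges.mp hf with ⟨a, b, h1, h2, rfl⟩ | ⟨a, b, h1, h2, rfl⟩
    · rcases mem_gHe.mp hp with h | h <;> rw [Prod.mk.injEq] at h
      · omega
      · obtain ⟨h3, h4⟩ := h
        have hb : b = k := by omega
        subst hb
        rw [h3]
    · exfalso
      apply hSV
      rcases mem_gVe.mp hp with h | h <;> rw [Prod.mk.injEq] at h
      · obtain ⟨h3, h4⟩ := h
        have hb : b = k + 1 := by omega
        subst hb
        exact mem_SVset.mpr ⟨a, by omega, rfl⟩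
      · obtain ⟨h3, h4⟩ := h
        have hb : b = k + 1 := by omega
        subst hb
        exact mem_SVset.mpr ⟨a, by omega, rfl⟩
  · rintro rfl
    refine ⟨⟨gHe_mem_big hi, by simp [gHe]⟩, fun hSV => ?_⟩
    have := col_of_SV hSV (a := i) (b := k) (by simp [gHe])
    omega

lemma incident_big_eq_small {n k a b : ℕ} (hb : b < k) :
    (gridGraph n (k + 2)).incident (a, b) = (gridGraph n (k + 1)).incident (a, b) := by
  ext f
  simp only [mem_incident']
  constructor
  · rintro ⟨hf, hp⟩
    refine ⟨small_of_big hf hp (by omega) ?_, hp⟩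
    intro h
    rw [h] at hp
    rcases mem_gHe.mp hp with hh | hh <;> rw [Prod.mk.injEq] at hh <;> omega
  · rintro ⟨hf, hp⟩
    exact ⟨grid_edges_mono (by omega) hf, hp⟩

lemma jigsaw_verts (n m : ℕ) : (jigsaw n m).verts = (gridGraph n m).edges := rfl

lemma jigsaw_edges (n m : ℕ) :
    (jigsaw n m).edges =
      (Finset.range n ×ˢ Finset.range m).image fun p => (gridGraph n m).incident p := rfl

/-- The intermediate hypergraph after the deletions and `t` merges. -/
def Mt (n k t : ℕ) : Hypergraph (Finset (ℕ × ℕ)) where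
  verts := (gridGraph n (k + 1)).edges ∪ (Finset.range n \ Finset.range t).image fun i => gHe i k
  edges :=
    ((Finset.range n ×ˢ Finset.range k).image fun p => (gridGraph n (k + 2)).incident p) ∪
    ((Finset.range t).image fun i => (gridGraph n (k + 1)).incident (i, k)) ∪
    ((Finset.range n \ Finset.range t).image fun i => (gridGraph n (k + 2)).incident (i, k)) ∪
    ((Finset.range n \ Finset.range t).image fun i => ({gHe i k} : Finset (Finset (ℕ × ℕ))))
  valid := by
    intro e he
    rcases Finset.mem_union.mp he with he | h4
    rcases Finset.mem_union.mp he with he | h3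
    rcases Finset.mem_union.mp he with h1 | h2
    · rcases Finset.mem_image.mp h1 with ⟨⟨a, b⟩, hp, rfl⟩
      obtain ⟨ha, hb⟩ := Finset.mem_product.mp hp
      rw [Finset.mem_range] at ha hb
      intro f hf
      obtain ⟨hbig, hpf⟩ := mem_incident'.mp hf
      have hne : f ≠ gHe a k := by
        intro h
        rw [h] at hpf
        rcases mem_gHe.mp hpf with hh | hh <;> rw [Prod.mk.injEq] at hh <;> omega
      exact Finset.mem_union_left _ (small_of_big hbig hpf (by omega) hne)
    · rcases Finset.mem_image.mp h2 with ⟨a, ha, rfl⟩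
      intro f hf
      exact Finset.mem_union_left _ (mem_incident'.mp hf).1
    · rcases Finset.mem_image.mp h3 with ⟨a, ha, rfl⟩
      intro f hf
      obtain ⟨hbig, hpf⟩ := mem_incident'.mp hf
      by_cases hne : f = gHe a k
      · subst hne
        exact Finset.mem_union_right _ (Finset.mem_image.mpr ⟨a, ha, rfl⟩)
      · exact Finset.mem_union_left _ (small_of_big hbig hpf le_rfl hne)
    · rcases Finset.mem_image.mp h4 with ⟨a, ha, rfl⟩
      intro f hf
      rw [Finset.mem_singleton] at hf
      subst hf
      exact Finset.mem_union_right _ (Finset.mem_image.mpr ⟨a, ha, rfl⟩)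

lemma Mt_verts (n k t : ℕ) :
    (Mt n k t).verts =
      (gridGraph n (k + 1)).edges ∪
        (Finset.range n \ Finset.range t).image fun i => gHe i k := rfl

lemma Mt_edges (n k t : ℕ) :
    (Mt n k t).edges =
      ((Finset.range n ×ˢ Finset.range k).image fun p => (gridGraph n (k + 2)).incident p) ∪
      ((Finset.range t).image fun i => (gridGraph n (k + 1)).incident (i, k)) ∪
      ((Finset.range n \ Finset.range t).image fun i => (gridGraph n (k + 2)).incident (i, k)) ∪
      ((Finset.range n \ Finset.range t).image fun i => ({gHe i k} : Finset (Finset (ℕ × ℕ)))) :=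
  rfl

lemma mem_range_sdiff {n t a : ℕ} :
    a ∈ Finset.range n \ Finset.range t ↔ a < n ∧ t ≤ a := by
  simp only [Finset.mem_sdiff, Finset.mem_range, not_lt]

lemma Mt_zero (n k : ℕ) : sdiffH (jigsaw n (k + 2)) (SVset n k) = Mt n k 0 := by
  refine hyp_ext ?_ ?_
  · rw [sdiffH_verts, jigsaw_verts, Mt_verts]
    ext f
    simp only [Finset.mem_sdiff, Finset.mem_union, Finset.mem_image, mem_range_sdiff]
    constructor
    · rintro ⟨hf, hSV⟩
      rcases mem_gridGraph_edges.mp hf with ⟨a, b, h1, h2, rfl⟩ | ⟨a, b, h1, h2, rfl⟩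
      · rcases Nat.lt_or_ge (b + 1) (k + 1) with h | h
        · exact Or.inl (mem_gridGraph_edges.mpr (Or.inl ⟨a, b, h1, h, rfl⟩))
        · have hb : b = k := by omega
          subst hb
          exact Or.inr ⟨a, ⟨Finset.mem_range.mpr h1, by simp⟩, rfl⟩
      · rcases Nat.lt_or_ge b (k + 1) with h | h
        · exact Or.inl (mem_gridGraph_edges.mpr (Or.inr ⟨a, b, h1, h, rfl⟩))
        · exfalso
          apply hSV
          have hb : b = k + 1 := by omega
          subst hb
          exact mem_SVset.mpr ⟨a, by omega, rfl⟩
    · rintro (hf | ⟨a, ⟨ha, -⟩, rfl⟩)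
      · refine ⟨grid_edges_mono (by omega) hf, fun hSV => ?_⟩
        rcases mem_SVset.mp hSV with ⟨i, hi, rfl⟩
        have := (col_lt hf (p := (i, k + 1)) (by simp [gVe])).2
        omega
      · refine ⟨gHe_mem_big (Finset.mem_range.mp ha), fun hSV => ?_⟩
        have := col_of_SV hSV (a := a) (b := k) (by simp [gHe])
        omega
  · rw [sdiffH_edges, jigsaw_edges, Mt_edges]
    ext f
    constructor
    · intro hf
      rcases Finset.mem_image.mp hf with ⟨g, hg, rfl⟩
      rcases Finset.mem_image.mp hg with ⟨⟨a, b⟩, hp, rfl⟩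
      obtain ⟨ha, hb⟩ := Finset.mem_product.mp hp
      rw [Finset.mem_range] at ha hb
      have hcase : b < k ∨ b = k ∨ b = k + 1 := by omega
      rcases hcase with h | h | h
      · refine Finset.mem_union_left _ (Finset.mem_union_left _ (Finset.mem_union_left _
          (Finset.mem_image.mpr ⟨(a, b), Finset.mem_product.mpr
            ⟨Finset.mem_range.mpr ha, Finset.mem_range.mpr h⟩, ?_⟩)))
        exact (incident_sdiff_SV (by omega)).symm
      · subst h
        refine Finset.mem_union_left _ (Finset.mem_union_right _
          (Finset.mem_image.mpr ⟨a, mem_range_sdiff.mpr ⟨ha, by omega⟩, ?_⟩))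
        exact (incident_sdiff_SV le_rfl).symm
      · subst h
        refine Finset.mem_union_right _
          (Finset.mem_image.mpr ⟨a, mem_range_sdiff.mpr ⟨ha, by omega⟩, ?_⟩)
        exact (incident_last_sdiff_SV ha).symm
    · intro hf
      rcases Finset.mem_union.mp hf with hf' | h4
      · rcases Finset.mem_union.mp hf' with hf'' | h3
        · rcases Finset.mem_union.mp hf'' with h1 | h2
          · rcases Finset.mem_image.mp h1 with ⟨⟨a, b⟩, hp, rfl⟩
            obtain ⟨ha, hb⟩ := Finset.mem_product.mp hp
            rw [Finset.mem_range] at ha hb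
            refine Finset.mem_image.mpr ⟨(gridGraph n (k + 2)).incident (a, b),
              Finset.mem_image.mpr ⟨(a, b), Finset.mem_product.mpr
                ⟨Finset.mem_range.mpr ha, Finset.mem_range.mpr (by omega)⟩, rfl⟩, ?_⟩
            exact incident_sdiff_SV (by omega)
          · exfalso
            rcases Finset.mem_image.mp h2 with ⟨a, ha, -⟩
            simp at ha
        · rcases Finset.mem_image.mp h3 with ⟨a, ha, rfl⟩
          rw [mem_range_sdiff] at ha
          refine Finset.mem_image.mpr ⟨(gridGraph n (k + 2)).incident (a, k),
            Finset.mem_image.mpr ⟨(a, k), Finset.mem_product.mpr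
              ⟨Finset.mem_range.mpr ha.1, Finset.mem_range.mpr (by omega)⟩, rfl⟩, ?_⟩
          exact incident_sdiff_SV le_rfl
      · rcases Finset.mem_image.mp h4 with ⟨a, ha, rfl⟩
        rw [mem_range_sdiff] at ha
        refine Finset.mem_image.mpr ⟨(gridGraph n (k + 2)).incident (a, k + 1),
          Finset.mem_image.mpr ⟨(a, k + 1), Finset.mem_product.mpr
            ⟨Finset.mem_range.mpr ha.1, Finset.mem_range.mpr (by omega)⟩, rfl⟩, ?_⟩
        exact incident_last_sdiff_SV ha.1

lemma incident_Mt {n k t : ℕ} (ht : t < n) :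
    (Mt n k t).incident (gHe t k) =
      insert ((gridGraph n (k + 2)).incident (t, k))
        {({gHe t k} : Finset (Finset (ℕ × ℕ)))} := by
  ext f
  rw [mem_incident']
  simp only [Finset.mem_insert, Finset.mem_singleton]
  constructor
  · rintro ⟨hf, hmem⟩
    rw [Mt_edges] at hf
    rcases Finset.mem_union.mp hf with hf' | h4
    rcases Finset.mem_union.mp hf' with hf'' | h3
    rcases Finset.mem_union.mp hf'' with h1 | h2
    · exfalso
      rcases Finset.mem_image.mp h1 with ⟨⟨a, b⟩, hp, rfl⟩
      obtain ⟨ha, hb⟩ := Finset.mem_product.mp hp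
      rw [Finset.mem_range] at ha hb
      have := (mem_incident'.mp hmem).2
      rcases mem_gHe.mp this with h | h <;> rw [Prod.mk.injEq] at h <;> omega
    · exfalso
      rcases Finset.mem_image.mp h2 with ⟨a, -, rfl⟩
      exact gHe_not_small (mem_incident'.mp hmem).1
    · rcases Finset.mem_image.mp h3 with ⟨a, -, rfl⟩
      have := (mem_incident'.mp hmem).2
      have hat : a = t := by
        rcases mem_gHe.mp this with h | h <;> rw [Prod.mk.injEq] at h <;> omega
      subst hat
      exact Or.inl rfl
    · rcases Finset.mem_image.mp h4 with ⟨a, -, rfl⟩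
      rw [Finset.mem_singleton] at hmem
      have hat := (gHe_inj hmem).1
      subst hat
      exact Or.inr rfl
  · have hW1 : gHe t k ∈ (gridGraph n (k + 2)).incident (t, k) :=
      mem_incident'.mpr ⟨gHe_mem_big ht, by simp [gHe]⟩
    rintro (rfl | rfl)
    · refine ⟨?_, hW1⟩
      rw [Mt_edges]
      exact Finset.mem_union_left _ (Finset.mem_union_right _
        (Finset.mem_image.mpr ⟨t, mem_range_sdiff.mpr ⟨ht, le_rfl⟩, rfl⟩))
    · refine ⟨?_, Finset.mem_singleton_self _⟩
      rw [Mt_edges]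
      exact Finset.mem_union_right _
        (Finset.mem_image.mpr ⟨t, mem_range_sdiff.mpr ⟨ht, le_rfl⟩, rfl⟩)

lemma mergedEdge_Mt {n k t : ℕ} (ht : t < n) :
    (Mt n k t).mergedEdge (gHe t k) = (gridGraph n (k + 1)).incident (t, k) := by
  have hrw : (Mt n k t).mergedEdge (gHe t k) =
      (((Mt n k t).incident (gHe t k)).biUnion id).erase (gHe t k) := rfl
  rw [hrw, incident_Mt ht]
  ext g
  simp only [Finset.mem_erase, Finset.mem_biUnion, Finset.mem_insert, Finset.mem_singleton, id]
  constructor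
  · rintro ⟨hne, e, (rfl | rfl), hg⟩
    · obtain ⟨hbig, hmem⟩ := mem_incident'.mp hg
      exact mem_incident'.mpr ⟨small_of_big hbig hmem le_rfl hne, hmem⟩
    · rw [Finset.mem_singleton] at hg
      exact absurd hg hne
  · intro hg
    obtain ⟨hsmall, hmem⟩ := mem_incident'.mp hg
    refine ⟨fun h => gHe_not_small (h ▸ hsmall), (gridGraph n (k + 2)).incident (t, k),
      Or.inl rfl, ?_⟩
    exact mem_incident'.mpr ⟨grid_edges_mono (by omega) hsmall, hmem⟩

lemma merge_Mt {n k t : ℕ} (ht : t < n) :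
    (Mt n k t).merge (gHe t k) = Mt n k (t + 1) := by
  have hW1 : gHe t k ∈ (gridGraph n (k + 2)).incident (t, k) :=
    mem_incident'.mpr ⟨gHe_mem_big ht, by simp [gHe]⟩
  refine hyp_ext ?_ ?_
  · show ((Mt n k t).verts).erase (gHe t k) = (Mt n k (t + 1)).verts
    rw [Mt_verts, Mt_verts]
    ext f
    simp only [Finset.mem_erase, Finset.mem_union, Finset.mem_image, mem_range_sdiff]
    constructor
    · rintro ⟨hne, hf | ⟨a, ⟨ha, hta⟩, rfl⟩⟩
      · exact Or.inl hf
      · refine Or.inr ⟨a, ⟨ha, ?_⟩, rfl⟩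
        have : a ≠ t := fun h => hne (by rw [h])
        omega
    · rintro (hf | ⟨a, ⟨ha, hta⟩, rfl⟩)
      · exact ⟨fun h => gHe_not_small (h ▸ hf), Or.inl hf⟩
      · refine ⟨fun h => ?_, Or.inr ⟨a, ⟨ha, by omega⟩, rfl⟩⟩
        have := (gHe_inj h).1
        omega
  · show ((Mt n k t).edges \ (Mt n k t).incident (gHe t k)) ∪ {(Mt n k t).mergedEdge (gHe t k)} =
      (Mt n k (t + 1)).edges
    rw [incident_Mt ht, mergedEdge_Mt ht]
    ext f
    simp only [Finset.mem_union, Finset.mem_sdiff, Finset.mem_insert, Finset.mem_singleton,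
      not_or]
    constructor
    · rintro (⟨hf, hne1, hne2⟩ | rfl)
      · rw [Mt_edges] at hf
        rw [Mt_edges]
        rcases Finset.mem_union.mp hf with hf' | h4
        rcases Finset.mem_union.mp hf' with hf'' | h3
        rcases Finset.mem_union.mp hf'' with h1 | h2
        · exact Finset.mem_union_left _ (Finset.mem_union_left _ (Finset.mem_union_left _ h1))
        · rcases Finset.mem_image.mp h2 with ⟨a, ha, rfl⟩
          rw [Finset.mem_range] at ha
          exact Finset.mem_union_left _ (Finset.mem_union_left _ (Finset.mem_union_right _
            (Finset.mem_image.mpr ⟨a, Finset.mem_range.mpr (by omega), rfl⟩)))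
        · rcases Finset.mem_image.mp h3 with ⟨a, ha, rfl⟩
          rw [mem_range_sdiff] at ha
          have hat : a ≠ t := fun h => hne1 (by rw [h])
          exact Finset.mem_union_left _ (Finset.mem_union_right _
            (Finset.mem_image.mpr ⟨a, mem_range_sdiff.mpr ⟨ha.1, by omega⟩, rfl⟩))
        · rcases Finset.mem_image.mp h4 with ⟨a, ha, rfl⟩
          rw [mem_range_sdiff] at ha
          have hat : a ≠ t := fun h => hne2 (by rw [h])
          exact Finset.mem_union_right _
            (Finset.mem_image.mpr ⟨a, mem_range_sdiff.mpr ⟨ha.1, by omega⟩, rfl⟩)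
      · rw [Mt_edges]
        exact Finset.mem_union_left _ (Finset.mem_union_left _ (Finset.mem_union_right _
          (Finset.mem_image.mpr ⟨t, Finset.mem_range.mpr (by omega), rfl⟩)))
    · intro hf
      rw [Mt_edges] at hf
      rcases Finset.mem_union.mp hf with hf' | h4
      rcases Finset.mem_union.mp hf' with hf'' | h3
      rcases Finset.mem_union.mp hf'' with h1 | h2
      · refine Or.inl ⟨?_, ?_, ?_⟩
        · rw [Mt_edges]
          exact Finset.mem_union_left _ (Finset.mem_union_left _ (Finset.mem_union_left _ h1))
        · rcases Finset.mem_image.mp h1 with ⟨⟨a, b⟩, hp, rfl⟩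
          obtain ⟨ha, hb⟩ := Finset.mem_product.mp hp
          rw [Finset.mem_range] at ha hb
          intro h
          have : gHe t k ∈ (gridGraph n (k + 2)).incident (a, b) := by rw [h]; exact hW1
          have := (mem_incident'.mp this).2
          rcases mem_gHe.mp this with hh | hh <;> rw [Prod.mk.injEq] at hh <;> omega
        · rcases Finset.mem_image.mp h1 with ⟨⟨a, b⟩, hp, rfl⟩
          obtain ⟨ha, hb⟩ := Finset.mem_product.mp hp
          rw [Finset.mem_range] at ha hb
          intro h
          have : gHe t k ∈ ({gHe t k} : Finset (Finset (ℕ × ℕ))) := Finset.mem_singleton_self _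
          rw [← h] at this
          have := (mem_incident'.mp this).2
          rcases mem_gHe.mp this with hh | hh <;> rw [Prod.mk.injEq] at hh <;> omega
      · rcases Finset.mem_image.mp h2 with ⟨a, ha, rfl⟩
        rw [Finset.mem_range] at ha
        rcases Nat.lt_or_ge a t with hat | hat
        · refine Or.inl ⟨?_, ?_, ?_⟩
          · rw [Mt_edges]
            exact Finset.mem_union_left _ (Finset.mem_union_left _ (Finset.mem_union_right _
              (Finset.mem_image.mpr ⟨a, Finset.mem_range.mpr hat, rfl⟩)))
          · intro h
            have : gHe t k ∈ (gridGraph n (k + 1)).incident (a, k) := by rw [h]; exact hW1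
            exact gHe_not_small (mem_incident'.mp this).1
          · intro h
            have : gHe t k ∈ ({gHe t k} : Finset (Finset (ℕ × ℕ))) := Finset.mem_singleton_self _
            rw [← h] at this
            exact gHe_not_small (mem_incident'.mp this).1
        · have hat' : a = t := by omega
          subst hat'
          exact Or.inr rfl
      · rcases Finset.mem_image.mp h3 with ⟨a, ha, rfl⟩
        rw [mem_range_sdiff] at ha
        refine Or.inl ⟨?_, ?_, ?_⟩
        · rw [Mt_edges]
          exact Finset.mem_union_left _ (Finset.mem_union_right _
            (Finset.mem_image.mpr ⟨a, mem_range_sdiff.mpr ⟨ha.1, by omega⟩, rfl⟩))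
        · intro h
          have : gHe t k ∈ (gridGraph n (k + 2)).incident (a, k) := by rw [h]; exact hW1
          have := (mem_incident'.mp this).2
          rcases mem_gHe.mp this with hh | hh <;> rw [Prod.mk.injEq] at hh <;> omega
        · intro h
          have : gHe t k ∈ ({gHe t k} : Finset (Finset (ℕ × ℕ))) := Finset.mem_singleton_self _
          rw [← h] at this
          have := (mem_incident'.mp this).2
          rcases mem_gHe.mp this with hh | hh <;> rw [Prod.mk.injEq] at hh <;> omega
      · rcases Finset.mem_image.mp h4 with ⟨a, ha, rfl⟩
        rw [mem_range_sdiff] at ha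
        refine Or.inl ⟨?_, ?_, ?_⟩
        · rw [Mt_edges]
          exact Finset.mem_union_right _
            (Finset.mem_image.mpr ⟨a, mem_range_sdiff.mpr ⟨ha.1, by omega⟩, rfl⟩)
        · intro h
          have : gHe t k ∈ (gridGraph n (k + 2)).incident (t, k) := hW1
          rw [← h] at this
          rw [Finset.mem_singleton] at this
          have := (gHe_inj this.symm).1
          omega
        · intro h
          have := (gHe_inj (Finset.singleton_injective h)).1
          omega

lemma Mt_final (n k : ℕ) : Mt n k n = jigsaw n (k + 1) := by
  refine hyp_ext ?_ ?_
  · rw [Mt_verts, jigsaw_verts]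
    simp
  · rw [Mt_edges, jigsaw_edges]
    ext f
    constructor
    · intro hf
      rcases Finset.mem_union.mp hf with hf' | h4
      rcases Finset.mem_union.mp hf' with hf'' | h3
      rcases Finset.mem_union.mp hf'' with h1 | h2
      · rcases Finset.mem_image.mp h1 with ⟨⟨a, b⟩, hp, rfl⟩
        obtain ⟨ha, hb⟩ := Finset.mem_product.mp hp
        rw [Finset.mem_range] at ha hb
        refine Finset.mem_image.mpr ⟨(a, b), Finset.mem_product.mpr
          ⟨Finset.mem_range.mpr ha, Finset.mem_range.mpr (by omega)⟩, ?_⟩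
        exact (incident_big_eq_small hb).symm
      · rcases Finset.mem_image.mp h2 with ⟨a, ha, rfl⟩
        rw [Finset.mem_range] at ha
        exact Finset.mem_image.mpr ⟨(a, k), Finset.mem_product.mpr
          ⟨Finset.mem_range.mpr ha, Finset.mem_range.mpr (by omega)⟩, rfl⟩
      · exfalso
        rcases Finset.mem_image.mp h3 with ⟨a, ha, -⟩
        rw [mem_range_sdiff] at ha
        omega
      · exfalso
        rcases Finset.mem_image.mp h4 with ⟨a, ha, -⟩
        rw [mem_range_sdiff] at ha
        omega
    · intro hf
      rcases Finset.mem_image.mp hf with ⟨⟨a, b⟩, hp, rfl⟩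
      obtain ⟨ha, hb⟩ := Finset.mem_product.mp hp
      rw [Finset.mem_range] at ha hb
      rcases Nat.lt_or_ge b k with h | h
      · refine Finset.mem_union_left _ (Finset.mem_union_left _ (Finset.mem_union_left _
          (Finset.mem_image.mpr ⟨(a, b), Finset.mem_product.mpr
            ⟨Finset.mem_range.mpr ha, Finset.mem_range.mpr h⟩, ?_⟩)))
        exact incident_big_eq_small h
      · have hb' : b = k := by omega
        subst hb'
        exact Finset.mem_union_left _ (Finset.mem_union_left _ (Finset.mem_union_right _
          (Finset.mem_image.mpr ⟨a, Finset.mem_range.mpr ha, rfl⟩)))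

lemma jigsaw_step (n k : ℕ) : (jigsaw n (k + 2)).DilutesTo (jigsaw n (k + 1)) := by
  refine ⟨Mt n k n, ?_, ?_⟩
  · have h0 : Relation.ReflTransGen Step (jigsaw n (k + 2)) (Mt n k 0) := by
      have hnd : ((List.range (n - 1)).map fun i => gVe i (k + 1)).Nodup := by
        refine List.Nodup.map ?_ List.nodup_range
        intro a b h
        exact (gVe_inj h).1
      have hmem : ∀ v ∈ (List.range (n - 1)).map fun i => gVe i (k + 1),
          v ∈ (jigsaw n (k + 2)).verts := by
        intro v hv
        rcases List.mem_map.mp hv with ⟨i, hi, rfl⟩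
        rw [List.mem_range] at hi
        rw [jigsaw_verts]
        exact mem_gridGraph_edges.mpr (Or.inr ⟨i, k + 1, by omega, by omega, rfl⟩)
      have hsteps := steps_sdiffH _ (jigsaw n (k + 2)) hnd hmem
      have hto : ((List.range (n - 1)).map fun i => gVe i (k + 1)).toFinset = SVset n k := by
        ext x
        simp [SVset]
      rw [hto, Mt_zero] at hsteps
      exact hsteps
    have hsteps : ∀ t, t ≤ n → Relation.ReflTransGen Step (Mt n k 0) (Mt n k t) := by
      intro t
      induction t with
      | zero => intro _; exact Relation.ReflTransGen.refl
      | succ s ih =>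
        intro hs
        have hsn : s < n := by omega
        refine Relation.ReflTransGen.tail (ih (by omega)) ?_
        have hv : gHe s k ∈ (Mt n k s).verts := by
          rw [Mt_verts]
          exact Finset.mem_union_right _
            (Finset.mem_image.mpr ⟨s, mem_range_sdiff.mpr ⟨hsn, le_rfl⟩, rfl⟩)
        have hne : ((Mt n k s).incident (gHe s k)).Nonempty := by
          rw [incident_Mt hsn]
          exact Finset.insert_nonempty _ _
        have hstep := Step.merge (Mt n k s) (gHe s k) hv hne
        rwa [merge_Mt hsn] at hstep
    exact h0.trans (hsteps n le_rfl)
  · rw [Mt_final]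
    exact ⟨id, Set.bijOn_id _, (Set.bijOn_id _).congr fun e _ => (Finset.image_id).symm⟩

/-- The `n×m` jigsaw dilutes to the `n×(m−1)` jigsaw. -/
theorem jigsaw_dilutesTo_jigsaw (n m : ℕ) (hn : 1 ≤ n) (hm : 2 ≤ m) :
    (jigsaw n m).DilutesTo (jigsaw n (m - 1)) := by
  obtain ⟨k, rfl⟩ : ∃ k, m = k + 2 := ⟨m - 2, by omega⟩
  have h : k + 2 - 1 = k + 1 := by omega
  rw [h]
  exact jigsaw_step n k

end Hypergraph

end DilutionPaper
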